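/- arXiv:1209.1119 — 2 statements merged into one kernel-verified Lean document; each statement's English description precedes it below -/
import Mathlib

section
/- Augment m ~ NB(r,p) as m = Σ_{t=1}^{l} u_t with u_t i.i.d. Log(p) and l ~ Poisson(-r ln(1-p)). Then the conditional posterior of l given m is P(l = j | m) = (Γ(r)/Γ(m+r)) |s(m,j)| r^j for j = 0, 1, ..., m. -/
noncomputable def poissonPMF (μ : ℝ) (k : ℕ) : ℝ :=
  Real.exp (-μ) * μ ^ k / (Nat.factorial k)

noncomputable def logPMF (p : ℝ) (k : ℕ) : ℝ :=
  -(p ^ k) / (k * Real.log (1 - p))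

/-- `logConvPow p l` is the PMF of the sum of `l` i.i.d. Log(p) random variables. -/
noncomputable def logConvPow (p : ℝ) : ℕ → ℕ → ℝ
  | 0, k => if k = 0 then 1 else 0
  | l + 1, k => ∑ i ∈ Finset.range (k + 1), logConvPow p l i * logPMF p (k - i)

/-- Unsigned Stirling numbers of the first kind. -/
def stirling1 : ℕ → ℕ → ℕ
  | 0, 0 => 1
  | 0, _ + 1 => 0
  | _ + 1, 0 => 0
  | m + 1, j + 1 => stirling1 m j + m * stirling1 m (j + 1)

lemma stirling1_succ (m j : ℕ) :
    stirling1 (m+1) (j+1) = stirling1 m j + m * stirling1 m (j+1) := rfl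

lemma stirling1_zero_right (m : ℕ) : stirling1 m 0 = if m = 0 then 1 else 0 := by
  cases m <;> simp [stirling1]

lemma stirling1_eq_zero : ∀ m j, m < j → stirling1 m j = 0
  | 0, 0, h => by omega
  | 0, j+1, _ => rfl
  | m+1, 0, h => by omega
  | m+1, j+1, h => by
      rw [stirling1_succ, stirling1_eq_zero m j (by omega),
        stirling1_eq_zero m (j+1) (by omega)]
      simp

lemma stirling1_one : ∀ m, stirling1 (m+1) 1 = Nat.factorial m
  | 0 => rfl
  | m+1 => by
      rw [stirling1_succ, stirling1_one m, stirling1_zero_right]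
      simp [Nat.factorial_succ]

lemma stirling1_conv : ∀ (m j : ℕ),
    (∑ i ∈ Finset.range m, Nat.choose m i * Nat.factorial (m-1-i) * stirling1 i j)
      = (j+1) * stirling1 m (j+1)
  | 0, j => by simp [stirling1_eq_zero 0 (j+1) (by omega)]
  | m+1, j => by
    rw [Finset.sum_range_succ']
    have peel : ∀ i ∈ Finset.range m,
        Nat.choose (m+1) (i+1) * Nat.factorial (m+1-1-(i+1)) * stirling1 (i+1) j
        = Nat.choose m i * Nat.factorial (m-1-i) * stirling1 (i+1) j
          + Nat.choose m (i+1) * Nat.factorial (m-1-i) * stirling1 (i+1) j := by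
      intro i hi
      rw [Nat.choose_succ_succ, show m+1-1-(i+1) = m-1-i from by omega]
      ring
    rw [Finset.sum_congr rfl peel, Finset.sum_add_distrib]
    have hU : (∑ i ∈ Finset.range m, Nat.choose m (i+1) * Nat.factorial (m-1-i) * stirling1 (i+1) j)
        + Nat.choose (m+1) 0 * Nat.factorial (m+1-1-0) * stirling1 0 j
        = stirling1 m j + ∑ i ∈ Finset.range m, Nat.choose m i * ((m-i) * Nat.factorial (m-1-i)) * stirling1 i j := by
      have h1 : (∑ i ∈ Finset.range (m+1), Nat.choose m i * Nat.factorial (m-i) * stirling1 i j)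
          = (∑ i ∈ Finset.range m, Nat.choose m (i+1) * Nat.factorial (m-(i+1)) * stirling1 (i+1) j)
            + Nat.choose m 0 * Nat.factorial (m-0) * stirling1 0 j :=
        Finset.sum_range_succ' _ m
      have h2 : (∑ i ∈ Finset.range (m+1), Nat.choose m i * Nat.factorial (m-i) * stirling1 i j)
          = (∑ i ∈ Finset.range m, Nat.choose m i * Nat.factorial (m-i) * stirling1 i j)
            + Nat.choose m m * Nat.factorial (m-m) * stirling1 m j :=
        Finset.sum_range_succ _ m
      have h3 : ∀ i ∈ Finset.range m, Nat.choose m i * Nat.factorial (m-i) * stirling1 i j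
          = Nat.choose m i * ((m-i) * Nat.factorial (m-1-i)) * stirling1 i j := by
        intro i hi
        simp only [Finset.mem_range] at hi
        rw [show m - i = (m-1-i) + 1 from by omega, Nat.factorial_succ]
      have h4 : ∀ i ∈ Finset.range m, Nat.choose m (i+1) * Nat.factorial (m-(i+1)) * stirling1 (i+1) j
          = Nat.choose m (i+1) * Nat.factorial (m-1-i) * stirling1 (i+1) j := by
        intro i hi
        rw [show m - (i+1) = m-1-i from by omega]
      rw [Finset.sum_congr rfl h4] at h1
      rw [Finset.sum_congr rfl h3] at h2
      simp only [Nat.choose_zero_right, Nat.choose_self, Nat.sub_self, Nat.sub_zero,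
        Nat.add_sub_cancel, Nat.factorial_zero, one_mul, mul_one] at h1 h2 ⊢
      omega
    rcases j with _ | j'
    · have hV : (∑ x ∈ Finset.range m, Nat.choose m x * Nat.factorial (m-1-x) * stirling1 (x+1) 0) = 0 := by
        apply Finset.sum_eq_zero; intro x hx; simp [stirling1]
      have key : stirling1 m 0
          + (∑ i ∈ Finset.range m, Nat.choose m i * ((m-i) * Nat.factorial (m-1-i)) * stirling1 i 0)
          = Nat.factorial m := by
        cases m with
        | zero => simp [stirling1]
        | succ n =>
          rw [stirling1_zero_right]
          rw [Finset.sum_eq_single_of_mem 0 (by simp)]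
          · simp [stirling1, Nat.factorial_succ]
          · intro b hb hb0
            rw [stirling1_zero_right]
            simp [hb0]
      rw [stirling1_one]
      omega
    · have hf0 : Nat.choose (m+1) 0 * Nat.factorial (m+1-1-0) * stirling1 0 (j'+1) = 0 := by
        simp [stirling1]
      have hVsplit : ∀ x ∈ Finset.range m,
          Nat.choose m x * Nat.factorial (m-1-x) * stirling1 (x+1) (j'+1)
          = Nat.choose m x * Nat.factorial (m-1-x) * stirling1 x j'
            + Nat.choose m x * (x * Nat.factorial (m-1-x)) * stirling1 x (j'+1) := by
        intro x hx
        rw [stirling1_succ]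
        ring
      have hV : (∑ x ∈ Finset.range m, Nat.choose m x * Nat.factorial (m-1-x) * stirling1 (x+1) (j'+1))
          = (j'+1) * stirling1 m (j'+1)
            + ∑ x ∈ Finset.range m, Nat.choose m x * (x * Nat.factorial (m-1-x)) * stirling1 x (j'+1) := by
        rw [Finset.sum_congr rfl hVsplit, Finset.sum_add_distrib, stirling1_conv m j']
      have hSW : (∑ i ∈ Finset.range m, Nat.choose m i * ((m-i) * Nat.factorial (m-1-i)) * stirling1 i (j'+1))
          + (∑ x ∈ Finset.range m, Nat.choose m x * (x * Nat.factorial (m-1-x)) * stirling1 x (j'+1))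
          = m * ((j'+2) * stirling1 m (j'+2)) := by
        rw [← Finset.sum_add_distrib, ← stirling1_conv m (j'+1), Finset.mul_sum]
        apply Finset.sum_congr rfl
        intro x hx
        simp only [Finset.mem_range] at hx
        have hmx : m - x + x = m := by omega
        calc Nat.choose m x * ((m-x) * Nat.factorial (m-1-x)) * stirling1 x (j'+1)
              + Nat.choose m x * (x * Nat.factorial (m-1-x)) * stirling1 x (j'+1)
            = ((m-x) + x) * (Nat.choose m x * Nat.factorial (m-1-x) * stirling1 x (j'+1)) := by ring
          _ = m * (Nat.choose m x * Nat.factorial (m-1-x) * stirling1 x (j'+1)) := by rw [hmx]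
      rw [hf0, hV]
      rw [hf0, add_zero] at hU
      rw [stirling1_succ m (j'+1), add_zero, hU]
      set W := ∑ x ∈ Finset.range m, Nat.choose m x * (x * Nat.factorial (m-1-x)) * stirling1 x (j'+1) with hW
      set Sm := ∑ i ∈ Finset.range m, Nat.choose m i * ((m-i) * Nat.factorial (m-1-i)) * stirling1 i (j'+1) with hSm
      set a := stirling1 m (j'+1) with ha
      set b := stirling1 m (j'+1+1) with hb
      have h5 : (j'+1)*a + W + (a+Sm) = (j'+2)*a + (Sm+W) := by ring
      rw [h5, hSW]
      ring

lemma logConvPow_eq (p : ℝ) (hp : 0 < p) (hp1 : p < 1) : ∀ (j m : ℕ),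
    logConvPow p j m = (Nat.factorial j * stirling1 m j * p ^ m)
      / (Nat.factorial m * (-Real.log (1 - p)) ^ j) := by
  have hq : 0 < -Real.log (1 - p) := by
    have : Real.log (1 - p) < 0 := Real.log_neg (by linarith) (by linarith)
    linarith
  set q : ℝ := -Real.log (1 - p) with hqdef
  have hq0 : q ≠ 0 := ne_of_gt hq
  have hlog : Real.log (1 - p) = -q := by rw [hqdef]; ring
  intro j
  induction j with
  | zero =>
    intro m
    cases m with
    | zero => simp [logConvPow, stirling1]
    | succ n =>
      show (if n+1 = 0 then (1:ℝ) else 0) = _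
      rw [stirling1_zero_right]
      simp
  | succ j ih =>
    intro m
    show (∑ i ∈ Finset.range (m + 1), logConvPow p j i * logPMF p (m - i)) = _
    rw [Finset.sum_range_succ]
    have hlast : logPMF p (m - m) = 0 := by
      simp [logPMF]
    rw [hlast, mul_zero, add_zero]
    have hterm : ∀ i ∈ Finset.range m,
        logConvPow p j i * logPMF p (m - i)
        = ((Nat.factorial j : ℝ) * p ^ m / (Nat.factorial m * q ^ (j+1)))
          * ((Nat.choose m i * Nat.factorial (m-1-i) * stirling1 i j : ℕ) : ℝ) := by
      intro i hi
      simp only [Finset.mem_range] at hi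
      have hD0 : ((m - i : ℕ) : ℝ) ≠ 0 := Nat.cast_ne_zero.mpr (by omega)
      have hFi : ((Nat.factorial i : ℕ) : ℝ) ≠ 0 := Nat.cast_ne_zero.mpr (Nat.factorial_ne_zero i)
      have hFm : ((Nat.factorial m : ℕ) : ℝ) ≠ 0 := Nat.cast_ne_zero.mpr (Nat.factorial_ne_zero m)
      have hlp : logPMF p (m - i) = p ^ (m - i) / (((m - i : ℕ) : ℝ) * q) := by
        rw [logPMF, hlog, mul_neg, neg_div_neg_eq]
      have h2 : Nat.factorial (m - i) = (m - i) * Nat.factorial (m-1-i) := by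
        rw [show m - i = (m-1-i)+1 from by omega, Nat.factorial_succ]
      have hCi : (Nat.choose m i : ℝ) * (Nat.factorial i) * (((m - i : ℕ)) * (Nat.factorial (m-1-i)))
          = (Nat.factorial m : ℝ) := by
        have h := Nat.choose_mul_factorial_mul_factorial (le_of_lt hi)
        rw [h2] at h
        exact_mod_cast h
      have hpp : p ^ i * p ^ (m - i) = p ^ m := by
        rw [← pow_add]
        congr 1
        omega
      rw [ih i, hlp]
      rw [div_mul_div_comm, div_mul_eq_mul_div, div_eq_div_iff (by
          refine mul_ne_zero (mul_ne_zero hFi (pow_ne_zero _ hq0)) (mul_ne_zero hD0 hq0))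
        (mul_ne_zero hFm (pow_ne_zero _ hq0))]
      push_cast
      rw [← hCi, ← hpp]
      ring
    rw [Finset.sum_congr rfl hterm, ← Finset.mul_sum, ← Nat.cast_sum, stirling1_conv m j]
    push_cast [Nat.factorial_succ]
    ring

lemma sum_stirling_pow (r : ℝ) : ∀ m : ℕ,
    (∑ j ∈ Finset.range (m+1), (stirling1 m j : ℝ) * r ^ j)
      = ∏ k ∈ Finset.range m, (r + k) := by
  intro m
  induction m with
  | zero => simp [stirling1]
  | succ m ih =>
    rw [Finset.sum_range_succ', Finset.prod_range_succ, ← ih]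
    have hsplit : ∀ j ∈ Finset.range (m+1),
        (stirling1 (m+1) (j+1) : ℝ) * r ^ (j+1)
        = (stirling1 m j : ℝ) * r ^ j * r + (m : ℝ) * ((stirling1 m (j+1) : ℝ) * r ^ (j+1)) := by
      intro j hj
      rw [stirling1_succ]
      push_cast
      ring
    rw [Finset.sum_congr rfl hsplit, Finset.sum_add_distrib, ← Finset.sum_mul, ← Finset.mul_sum]
    have hshift : (∑ j ∈ Finset.range (m+1), (stirling1 m (j+1) : ℝ) * r ^ (j+1))
        = (∑ j ∈ Finset.range (m+1), (stirling1 m j : ℝ) * r ^ j) - (stirling1 m 0 : ℝ) := by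
      have h1 : (∑ j ∈ Finset.range (m+2), (stirling1 m j : ℝ) * r ^ j)
          = (∑ j ∈ Finset.range (m+1), (stirling1 m (j+1) : ℝ) * r ^ (j+1))
            + (stirling1 m 0 : ℝ) * r ^ 0 := Finset.sum_range_succ' _ (m+1)
      have h2 : (∑ j ∈ Finset.range (m+2), (stirling1 m j : ℝ) * r ^ j)
          = (∑ j ∈ Finset.range (m+1), (stirling1 m j : ℝ) * r ^ j)
            + (stirling1 m (m+1) : ℝ) * r ^ (m+1) := Finset.sum_range_succ _ (m+1)
      rw [stirling1_eq_zero m (m+1) (by omega)] at h2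
      simp at h1 h2
      linarith
    have hm0 : (m : ℝ) * (stirling1 m 0 : ℝ) = 0 := by
      cases m with
      | zero => simp
      | succ n => rw [stirling1_zero_right]; simp
    rw [hshift, show (stirling1 (m+1) 0 : ℝ) = 0 from by rw [stirling1_zero_right]; simp]
    push_cast at hm0 ⊢
    rw [mul_sub, hm0]
    ring

lemma Gamma_asc (r : ℝ) (hr : 0 < r) : ∀ m : ℕ,
    Real.Gamma (m + r) = (∏ k ∈ Finset.range m, (r + k)) * Real.Gamma r := by
  intro m
  induction m with
  | zero => simp
  | succ m ih =>
    have h1 : ((m:ℝ) + 1) + r = ((m:ℝ) + r) + 1 := by ring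
    rw [Finset.prod_range_succ]
    push_cast
    rw [h1, Real.Gamma_add_one (by positivity), ih]
    ring

/-- Lemma 1: in the compound Poisson augmentation m = Σ_{t=1}^l Log(p),
l ~ Poisson(-r ln(1-p)), the conditional posterior of l given m is
P(l = j | m) = (Γ(r)/Γ(m+r)) |s(m,j)| r^j for 0 ≤ j ≤ m. -/
theorem crt_conditional_posterior (r p : ℝ) (hr : 0 < r) (hp : 0 < p) (hp1 : p < 1)
    (m j : ℕ) (hj : j ≤ m) :
    (logConvPow p j m * poissonPMF (-r * Real.log (1 - p)) j)
      / (∑' j' : ℕ, logConvPow p j' m * poissonPMF (-r * Real.log (1 - p)) j')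
    = Real.Gamma r / Real.Gamma (m + r) * stirling1 m j * r ^ j := by
  have hq : 0 < -Real.log (1 - p) := by
    have : Real.log (1 - p) < 0 := Real.log_neg (by linarith) (by linarith)
    linarith
  set q : ℝ := -Real.log (1 - p) with hqdef
  have hq0 : q ≠ 0 := ne_of_gt hq
  set μ : ℝ := -r * Real.log (1 - p) with hμdef
  have hμ : μ = r * q := by rw [hμdef, hqdef]; ring
  set C : ℝ := Real.exp (-μ) * p ^ m / (Nat.factorial m) with hCdef
  have hC : 0 < C := by
    rw [hCdef]
    have : (0:ℝ) < Nat.factorial m := by exact_mod_cast (Nat.factorial_pos m)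
    positivity
  have termeq : ∀ j' : ℕ,
      logConvPow p j' m * poissonPMF μ j'
      = C * ((stirling1 m j' : ℝ) * r ^ j') := by
    intro j'
    rw [logConvPow_eq p hp hp1 j' m, poissonPMF, hμ, mul_pow, hCdef]
    have hFj : ((Nat.factorial j' : ℕ) : ℝ) ≠ 0 := Nat.cast_ne_zero.mpr (Nat.factorial_ne_zero j')
    have hFm : ((Nat.factorial m : ℕ) : ℝ) ≠ 0 := Nat.cast_ne_zero.mpr (Nat.factorial_ne_zero m)
    have hqp : (q : ℝ) ^ j' ≠ 0 := pow_ne_zero _ hq0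
    rw [← hqdef, ← hμ]
    field_simp
  have hGr : 0 < Real.Gamma r := Real.Gamma_pos_of_pos hr
  have hGmr : 0 < Real.Gamma ((m:ℝ) + r) := Real.Gamma_pos_of_pos (by positivity)
  have hprod : Real.Gamma ((m:ℝ) + r) = (∏ k ∈ Finset.range m, (r + k)) * Real.Gamma r :=
    Gamma_asc r hr m
  have hsum : (∑' j' : ℕ, logConvPow p j' m * poissonPMF μ j')
      = C * (∏ k ∈ Finset.range m, (r + k)) := by
    rw [tsum_eq_sum (s := Finset.range (m+1)) (by
      intro b hb
      simp only [Finset.mem_range] at hb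
      rw [termeq b, stirling1_eq_zero m b (by omega)]
      simp)]
    rw [Finset.sum_congr rfl (fun j' _ => termeq j'), ← Finset.mul_sum, sum_stirling_pow r m]
  rw [hsum, termeq j]
  have hP : 0 < (∏ k ∈ Finset.range m, (r + (k:ℝ))) := by
    apply Finset.prod_pos
    intro k hk
    positivity
  rw [mul_div_mul_left _ _ (ne_of_gt hC), hprod]
  field_simp
end

section
/- Let m ~ NB(r,p) with r ~ Gamma(r₁, 1/c₁), and set p' = -ln(1-p)/(c₁ - ln(1-p)). Then m can equivalently be generated by the compound hierarchy: l' ~ Poisson(-r₁ ln(1-p')), l = Σ_{t'=1}^{l'} Log(p'), m = Σ_{t=1}^{l} Log(p). In particular, if l ~ Poisson(-r ln(1-p)) with r ~ Gamma(r₁, 1/c₁), then marginally l ~ NB(r₁, p'). -/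
open MeasureTheory

noncomputable def gammaPDF (a θ x : ℝ) : ℝ :=
  if 0 < x then x ^ (a - 1) * Real.exp (-x / θ) / (Real.Gamma a * θ ^ a) else 0

noncomputable def nbPMF (r p : ℝ) (k : ℕ) : ℝ :=
  Real.Gamma (r + k) / (Nat.factorial k * Real.Gamma r) * (1 - p) ^ r * p ^ k

lemma logPMF_eq (p : ℝ) (j : ℕ) : logPMF p j = p ^ j / (j * (-Real.log (1 - p))) := by
  unfold logPMF
  rw [mul_neg, div_neg, neg_div]

lemma logPMF_zero (p : ℝ) : logPMF p 0 = 0 := by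
  simp [logPMF]

lemma logConvPow_zero (p : ℝ) (k : ℕ) : logConvPow p 0 k = if k = 0 then 1 else 0 := rfl

lemma logConvPow_succ (p : ℝ) (l k : ℕ) :
    logConvPow p (l + 1) k = ∑ i ∈ Finset.range (k + 1), logConvPow p l i * logPMF p (k - i) := rfl

lemma logConvPow_eq_zero (p : ℝ) : ∀ l k, k < l → logConvPow p l k = 0 := by
  intro l
  induction l with
  | zero => intro k hk; omega
  | succ l IH =>
    intro k hk
    rw [logConvPow_succ]
    refine Finset.sum_eq_zero fun i hi => ?_
    rw [Finset.mem_range] at hi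
    rcases lt_or_ge i l with h | h
    · rw [IH i h, zero_mul]
    · have : k - i = 0 := by omega
      rw [this, logPMF_zero, mul_zero]

lemma poisson_succ (μ : ℝ) (l : ℕ) :
    ((l : ℝ) + 1) * poissonPMF μ (l + 1) = μ * poissonPMF μ l := by
  unfold poissonPMF
  rw [Nat.factorial_succ]
  push_cast
  have h1 : (l.factorial : ℝ) ≠ 0 := Nat.cast_ne_zero.2 (Nat.factorial_ne_zero l)
  have h2 : ((l : ℝ) + 1) ≠ 0 := by positivity
  field_simp
  ring

lemma panjer (p : ℝ) : ∀ (l k : ℕ), (k : ℝ) * logConvPow p (l + 1) k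
    = ((l : ℝ) + 1) * ∑ j ∈ Finset.range (k + 1),
        (j : ℝ) * logPMF p j * logConvPow p l (k - j) := by
  intro l
  induction l with
  | zero =>
    intro k
    have hL : logConvPow p 1 k = logPMF p k := by
      rw [logConvPow_succ]
      rw [Finset.sum_eq_single_of_mem 0 (Finset.mem_range.2 (Nat.succ_pos k))]
      · simp [logConvPow_zero]
      · intro i _ hne; simp [logConvPow_zero, hne]
    have hR : ∑ j ∈ Finset.range (k + 1), (j : ℝ) * logPMF p j * logConvPow p 0 (k - j)
        = (k : ℝ) * logPMF p k := by
      rw [Finset.sum_eq_single_of_mem k (Finset.self_mem_range_succ k)]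
      · simp [logConvPow_zero]
      · intro j hj hne
        have : k - j ≠ 0 := by rw [Finset.mem_range] at hj; omega
        simp [logConvPow_zero, this]
    rw [hL, hR]
    push_cast
    ring
  | succ l IH =>
    intro k
    set T := ∑ j ∈ Finset.range (k + 1),
        (j : ℝ) * logPMF p j * logConvPow p (l + 1) (k - j) with hT
    have key1 : ∑ i ∈ Finset.range (k + 1),
        (i : ℝ) * logConvPow p (l + 1) i * logPMF p (k - i) = ((l : ℝ) + 1) * T := by
      calc ∑ i ∈ Finset.range (k + 1), (i : ℝ) * logConvPow p (l + 1) i * logPMF p (k - i)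
          = ∑ i ∈ Finset.range (k + 1), (((l : ℝ) + 1) *
              ∑ j ∈ Finset.range (i + 1), (j : ℝ) * logPMF p j * logConvPow p l (i - j))
                * logPMF p (k - i) := by
            refine Finset.sum_congr rfl fun i _ => ?_
            rw [IH i]
        _ = ((l : ℝ) + 1) * ∑ i ∈ Finset.range (k + 1), ∑ j ∈ Finset.range (i + 1),
              (j : ℝ) * logPMF p j * (logConvPow p l (i - j) * logPMF p (k - i)) := by
            rw [Finset.mul_sum]
            refine Finset.sum_congr rfl fun i _ => ?_
            rw [mul_assoc, Finset.sum_mul]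
            congr 1
            refine Finset.sum_congr rfl fun j _ => ?_
            ring
        _ = ((l : ℝ) + 1) * ∑ j ∈ Finset.range (k + 1), ∑ i ∈ Finset.Ico j (k + 1),
              (j : ℝ) * logPMF p j * (logConvPow p l (i - j) * logPMF p (k - i)) := by
            congr 1
            refine Finset.sum_comm' ?_
            intro i j
            simp only [Finset.mem_range, Finset.mem_Ico]
            omega
        _ = ((l : ℝ) + 1) * T := by
            congr 1
            refine Finset.sum_congr rfl fun j hj => ?_
            rw [Finset.mem_range] at hj
            rw [← Finset.mul_sum]
            congr 1
            rw [Finset.sum_Ico_eq_sum_range, logConvPow_succ,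
              show k + 1 - j = (k - j) + 1 from by omega]
            refine Finset.sum_congr rfl fun i _ => ?_
            rw [Nat.add_sub_cancel_left, Nat.sub_add_eq]
    have key2 : ∑ i ∈ Finset.range (k + 1),
        logConvPow p (l + 1) i * (((k - i : ℕ) : ℝ) * logPMF p (k - i)) = T := by
      rw [← Finset.sum_range_reflect]
      refine Finset.sum_congr rfl fun j hj => ?_
      rw [Finset.mem_range] at hj
      rw [show k + 1 - 1 - j = k - j from by omega, show k - (k - j) = j from by omega]
      ring
    rw [logConvPow_succ]
    calc (k : ℝ) * ∑ i ∈ Finset.range (k + 1), logConvPow p (l + 1) i * logPMF p (k - i)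
        = ∑ i ∈ Finset.range (k + 1), ((i : ℝ) * logConvPow p (l + 1) i * logPMF p (k - i)
            + logConvPow p (l + 1) i * (((k - i : ℕ) : ℝ) * logPMF p (k - i))) := by
          rw [Finset.mul_sum]
          refine Finset.sum_congr rfl fun i hi => ?_
          rw [Finset.mem_range] at hi
          rw [Nat.cast_sub (by omega : i ≤ k)]
          ring
      _ = (((l : ℝ) + 1) * T) + T := by rw [Finset.sum_add_distrib, key1, key2]
      _ = ((l + 1 : ℕ) + 1 : ℝ) * T := by push_cast; ring

noncomputable def compPMF (μ p : ℝ) (k : ℕ) : ℝ :=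
  ∑ l ∈ Finset.range (k + 1), poissonPMF μ l * logConvPow p l k

lemma compPMF_cut (μ p : ℝ) (k n : ℕ) (h : k ≤ n) :
    ∑ l ∈ Finset.range (n + 1), poissonPMF μ l * logConvPow p l k = compPMF μ p k := by
  rw [compPMF]
  symm
  refine Finset.sum_subset (Finset.range_subset_range.2 (by omega)) ?_
  intro l hl hnl
  rw [Finset.mem_range] at hl hnl
  rw [logConvPow_eq_zero p l k (by omega), mul_zero]

lemma Frec (μ p : ℝ) (k : ℕ) :
    ((k : ℝ) + 1) * compPMF μ p (k + 1)
      = μ * ∑ j ∈ Finset.range (k + 2), (j : ℝ) * logPMF p j * compPMF μ p (k + 1 - j) := by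
  have step1 : ((k : ℝ) + 1) * compPMF μ p (k + 1)
      = ∑ l ∈ Finset.range (k + 1), μ * (poissonPMF μ l *
          ∑ j ∈ Finset.range (k + 2), (j : ℝ) * logPMF p j * logConvPow p l (k + 1 - j)) := by
    rw [compPMF, Finset.mul_sum, Finset.sum_range_succ']
    have h0 : logConvPow p 0 (k + 1) = 0 := by simp [logConvPow_zero]
    rw [h0]
    simp only [mul_zero, add_zero]
    refine Finset.sum_congr rfl fun l _ => ?_
    set S := ∑ j ∈ Finset.range (k + 2), (j : ℝ) * logPMF p j * logConvPow p l (k + 1 - j)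
      with hS
    have hp := panjer p l (k + 1)
    push_cast at hp
    rw [← hS] at hp
    have hps := poisson_succ μ l
    linear_combination poissonPMF μ (l + 1) * hp + S * hps
  rw [step1, ← Finset.mul_sum]
  congr 1
  calc ∑ l ∈ Finset.range (k + 1), poissonPMF μ l *
          ∑ j ∈ Finset.range (k + 2), (j : ℝ) * logPMF p j * logConvPow p l (k + 1 - j)
      = ∑ l ∈ Finset.range (k + 1), ∑ j ∈ Finset.range (k + 2),
          (j : ℝ) * logPMF p j * (poissonPMF μ l * logConvPow p l (k + 1 - j)) := by
        refine Finset.sum_congr rfl fun l _ => ?_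
        rw [Finset.mul_sum]
        refine Finset.sum_congr rfl fun j _ => ?_
        ring
    _ = ∑ j ∈ Finset.range (k + 2), ∑ l ∈ Finset.range (k + 1),
          (j : ℝ) * logPMF p j * (poissonPMF μ l * logConvPow p l (k + 1 - j)) :=
        Finset.sum_comm
    _ = ∑ j ∈ Finset.range (k + 2), (j : ℝ) * logPMF p j * compPMF μ p (k + 1 - j) := by
        refine Finset.sum_congr rfl fun j hj => ?_
        rw [← Finset.mul_sum]
        match j with
        | 0 => simp
        | j + 1 =>
          congr 1
          exact compPMF_cut μ p (k + 1 - (j + 1)) k (by omega)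

lemma gamma_sum (x : ℝ) (hx : 0 < x) : ∀ k : ℕ,
    x * ∑ i ∈ Finset.range (k + 1), Real.Gamma (x + i) / (i.factorial : ℝ)
      = Real.Gamma (x + (k + 1 : ℕ)) / (k.factorial : ℝ) := by
  intro k
  induction k with
  | zero =>
    rw [show ((0 + 1 : ℕ) : ℝ) = 1 by norm_num, Real.Gamma_add_one hx.ne',
      show (0 : ℕ) + 1 = 1 from rfl, Finset.sum_range_one]
    norm_num
  | succ k IH =>
    rw [Finset.sum_range_succ, mul_add, IH]
    have hne : x + ((k + 1 : ℕ) : ℝ) ≠ 0 := by push_cast; positivity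
    have hG : Real.Gamma (x + ((k + 2 : ℕ) : ℝ)) = (x + ((k + 1 : ℕ) : ℝ)) *
        Real.Gamma (x + ((k + 1 : ℕ) : ℝ)) := by
      rw [← Real.Gamma_add_one hne]
      congr 1
      push_cast
      ring
    rw [hG, Nat.factorial_succ]
    have h1 : ((k.factorial : ℝ)) ≠ 0 := Nat.cast_ne_zero.2 (Nat.factorial_ne_zero k)
    have h2 : (((k + 1) * k.factorial : ℕ) : ℝ) ≠ 0 := by
      exact Nat.cast_ne_zero.2 (by positivity)
    push_cast
    push_cast at h2
    field_simp
    ring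

lemma log_pos' {p : ℝ} (hp : 0 < p) (hp1 : p < 1) : 0 < -Real.log (1 - p) := by
  have h : Real.log (1 - p) < 0 := Real.log_neg (by linarith) (by linarith)
  linarith

lemma nbrec (p : ℝ) (hp : 0 < p) (hp1 : p < 1) (x : ℝ) (hx : 0 < x) (k : ℕ) :
    ((k : ℝ) + 1) * nbPMF x p (k + 1)
      = (x * (-Real.log (1 - p))) * ∑ j ∈ Finset.range (k + 2),
          (j : ℝ) * logPMF p j * nbPMF x p (k + 1 - j) := by
  set L := -Real.log (1 - p) with hLdef
  have hL : 0 < L := log_pos' hp hp1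
  have hGx : Real.Gamma x ≠ 0 := (Real.Gamma_pos_of_pos hx).ne'
  rw [Finset.sum_range_succ']
  simp only [Nat.cast_zero, zero_mul, add_zero]
  have hterm : ∀ i ∈ Finset.range (k + 1),
      ((i + 1 : ℕ) : ℝ) * logPMF p (i + 1) * nbPMF x p (k + 1 - (i + 1))
        = (p ^ (k + 1) * (1 - p) ^ x / (L * Real.Gamma x)) *
            (Real.Gamma (x + (k - i : ℕ)) / (((k - i).factorial : ℝ))) := by
    intro i hi
    rw [Finset.mem_range] at hi
    rw [logPMF_eq, show k + 1 - (i + 1) = k - i from by omega, nbPMF]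
    have h1 : ((i + 1 : ℕ) : ℝ) ≠ 0 := by positivity
    have h2 : ((k - i).factorial : ℝ) ≠ 0 := Nat.cast_ne_zero.2 (Nat.factorial_ne_zero _)
    have hpow : p ^ (i + 1) * p ^ (k - i) = p ^ (k + 1) := by
      rw [← pow_add]
      congr 1
      omega
    rw [← hLdef]
    field_simp
    rw [← hpow]
    ring
  rw [Finset.sum_congr rfl hterm, ← Finset.mul_sum]
  have hreflect : ∑ i ∈ Finset.range (k + 1),
      Real.Gamma (x + ((k - i : ℕ) : ℝ)) / (((k - i).factorial : ℝ))
        = ∑ i ∈ Finset.range (k + 1), Real.Gamma (x + i) / ((i.factorial : ℝ)) := by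
    have h := Finset.sum_range_reflect
      (fun i => Real.Gamma (x + (i : ℝ)) / ((i.factorial : ℝ))) (k + 1)
    simp only [Nat.add_sub_cancel] at h
    exact h
  rw [hreflect]
  have hsum := gamma_sum x hx k
  rw [nbPMF]
  have hkf : (((k + 1).factorial : ℕ) : ℝ) = ((k : ℝ) + 1) * (k.factorial : ℝ) := by
    rw [Nat.factorial_succ]
    push_cast
    ring
  have hk1 : ((k : ℝ) + 1) ≠ 0 := by positivity
  have hkfne : ((k.factorial : ℝ)) ≠ 0 := Nat.cast_ne_zero.2 (Nat.factorial_ne_zero _)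
  calc ((k : ℝ) + 1) * (Real.Gamma (x + ((k + 1 : ℕ) : ℝ)) /
          (((k + 1).factorial : ℝ) * Real.Gamma x) * (1 - p) ^ x * p ^ (k + 1))
      = (Real.Gamma (x + ((k + 1 : ℕ) : ℝ)) / (k.factorial : ℝ)) *
          ((1 - p) ^ x * p ^ (k + 1) / Real.Gamma x) := by
        rw [hkf]
        field_simp
    _ = (x * ∑ i ∈ Finset.range (k + 1), Real.Gamma (x + i) / ((i.factorial : ℝ))) *
          ((1 - p) ^ x * p ^ (k + 1) / Real.Gamma x) := by rw [hsum]
    _ = x * L * (p ^ (k + 1) * (1 - p) ^ x / (L * Real.Gamma x) *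
          ∑ i ∈ Finset.range (k + 1), Real.Gamma (x + i) / ((i.factorial : ℝ))) := by
        field_simp

lemma star (p : ℝ) (hp : 0 < p) (hp1 : p < 1) (x : ℝ) (hx : 0 < x) :
    ∀ k : ℕ, nbPMF x p k = compPMF (x * (-Real.log (1 - p))) p k := by
  intro k
  induction k using Nat.strong_induction_on with
  | _ k IH =>
    cases k with
    | zero =>
      have hGx : Real.Gamma x ≠ 0 := (Real.Gamma_pos_of_pos hx).ne'
      have hrw : (1 - p) ^ x = Real.exp (-(x * -Real.log (1 - p))) := by
        rw [Real.rpow_def_of_pos (by linarith)]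
        congr 1
        ring
      simp [nbPMF, compPMF, Finset.sum_range_one, logConvPow_zero, poissonPMF, hGx, hrw]
    | succ k =>
      have h1 := Frec (x * (-Real.log (1 - p))) p k
      have h2 := nbrec p hp hp1 x hx k
      have hsums : ∑ j ∈ Finset.range (k + 2), (j : ℝ) * logPMF p j * nbPMF x p (k + 1 - j)
          = ∑ j ∈ Finset.range (k + 2), (j : ℝ) * logPMF p j *
              compPMF (x * (-Real.log (1 - p))) p (k + 1 - j) := by
        refine Finset.sum_congr rfl fun j hj => ?_
        match j with
        | 0 => simp
        | j + 1 => rw [IH (k + 1 - (j + 1)) (by omega)]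
      have hmul : ((k : ℝ) + 1) * nbPMF x p (k + 1)
          = ((k : ℝ) + 1) * compPMF (x * (-Real.log (1 - p))) p (k + 1) := by
        rw [h2, hsums, ← h1]
      exact mul_left_cancel₀ (by positivity : ((k : ℝ) + 1) ≠ 0) hmul

lemma integrableOn_rpow_exp {a r : ℝ} (ha : 0 < a) (hr : 0 < r) :
    IntegrableOn (fun x : ℝ => x ^ (a - 1) * Real.exp (-(r * x))) (Set.Ioi 0) := by
  have h := Real.GammaIntegral_convergent ha
  have h2 := (integrableOn_Ioi_comp_mul_left_iff
      (fun x : ℝ => Real.exp (-x) * x ^ (a - 1)) 0 hr).2 (by simpa using h)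
  have h3 := h2.const_mul ((r : ℝ) ^ (a - 1))⁻¹
  have h4 : IntegrableOn
      (fun x : ℝ => ((r : ℝ) ^ (a - 1))⁻¹ * (Real.exp (-(r * x)) * (r * x) ^ (a - 1)))
      (Set.Ioi 0) := h3
  refine h4.congr_fun ?_ measurableSet_Ioi
  intro x hx
  have hx0 : (0 : ℝ) < x := hx
  have hrne : (r : ℝ) ^ (a - 1) ≠ 0 := (Real.rpow_pos_of_pos hr _).ne'
  simp only
  rw [Real.mul_rpow hr.le hx0.le]
  field_simp

lemma part1 (r₁ c₁ p : ℝ) (hr₁ : 0 < r₁) (hc₁ : 0 < c₁) (hp : 0 < p) (hp1 : p < 1) (l : ℕ) :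
    (∫ x in Set.Ioi (0 : ℝ),
        poissonPMF (-x * Real.log (1 - p)) l * gammaPDF r₁ (1 / c₁) x)
      = nbPMF r₁ (-Real.log (1 - p) / (c₁ - Real.log (1 - p))) l := by
  set L := -Real.log (1 - p) with hLdef
  have hL : 0 < L := log_pos' hp hp1
  have hcL : 0 < c₁ + L := by linarith
  set C := L ^ l / ((l.factorial : ℝ) * Real.Gamma r₁ * (1 / c₁) ^ r₁) with hC
  have hfac : ((l.factorial : ℕ) : ℝ) ≠ 0 := Nat.cast_ne_zero.2 (Nat.factorial_ne_zero _)
  have hG : Real.Gamma r₁ ≠ 0 := (Real.Gamma_pos_of_pos hr₁).ne'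
  have hcr : (0 : ℝ) < (1 / c₁) ^ r₁ := Real.rpow_pos_of_pos (by positivity) _
  have h_eq : ∀ x ∈ Set.Ioi (0 : ℝ),
      poissonPMF (-x * Real.log (1 - p)) l * gammaPDF r₁ (1 / c₁) x
        = C * (x ^ ((r₁ + l) - 1) * Real.exp (-((c₁ + L) * x))) := by
    intro x hx
    have hx0 : (0 : ℝ) < x := hx
    rw [poissonPMF, gammaPDF, if_pos hx0]
    have h1 : (-x * Real.log (1 - p)) ^ l = x ^ l * L ^ l := by
      rw [show -x * Real.log (1 - p) = x * L by rw [hLdef]; ring, mul_pow]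
    have h2 : -x / (1 / c₁) = -(c₁ * x) := by field_simp
    have h3 : Real.exp (-(-x * Real.log (1 - p))) * Real.exp (-(c₁ * x))
        = Real.exp (-((c₁ + L) * x)) := by
      rw [← Real.exp_add]
      congr 1
      rw [hLdef]; ring
    have h4 : x ^ ((r₁ + l) - 1) = x ^ (r₁ - 1) * x ^ (l : ℕ) := by
      rw [← Real.rpow_natCast x l, ← Real.rpow_add hx0]
      congr 1
      ring
    rw [h1, h2, h4, hC]
    field_simp
    rw [← Real.exp_add]
    congr 1
    rw [hLdef]; ring
  rw [setIntegral_congr_fun measurableSet_Ioi h_eq, MeasureTheory.integral_const_mul,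
    Real.integral_rpow_mul_exp_neg_mul_Ioi (by positivity) hcL]
  -- algebra
  rw [nbPMF, show c₁ - Real.log (1 - p) = c₁ + L by rw [hLdef]; ring]
  have hp' : 1 - L / (c₁ + L) = c₁ / (c₁ + L) := by field_simp; ring
  rw [hp']
  rw [Real.div_rpow hc₁.le hcL.le, div_pow,
    show (1 / (c₁ + L)) ^ (r₁ + (l : ℝ)) = (1 / (c₁ + L)) ^ r₁ * (1 / (c₁ + L)) ^ (l : ℝ)
      from Real.rpow_add (by positivity) _ _,
    Real.rpow_natCast,
    Real.div_rpow zero_le_one hcL.le, Real.one_rpow,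
    div_pow, one_pow, hC,
    show (1 / c₁ : ℝ) ^ r₁ = 1 / c₁ ^ r₁ by
      rw [Real.div_rpow zero_le_one hc₁.le, Real.one_rpow]]
  have h5 : (0 : ℝ) < (c₁ + L) ^ r₁ := Real.rpow_pos_of_pos hcL _
  have h6 : (0 : ℝ) < c₁ ^ r₁ := Real.rpow_pos_of_pos hc₁ _
  have h7 : (0 : ℝ) < (c₁ + L) ^ l := by positivity
  field_simp

lemma integrable_pg (r₁ c₁ p : ℝ) (hr₁ : 0 < r₁) (hc₁ : 0 < c₁) (hp : 0 < p) (hp1 : p < 1)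
    (l : ℕ) :
    IntegrableOn
      (fun x : ℝ => poissonPMF (-x * Real.log (1 - p)) l * gammaPDF r₁ (1 / c₁) x)
      (Set.Ioi 0) := by
  set L := -Real.log (1 - p) with hLdef
  have hL : 0 < L := log_pos' hp hp1
  have hcL : 0 < c₁ + L := by linarith
  set C := L ^ l / ((l.factorial : ℝ) * Real.Gamma r₁ * (1 / c₁) ^ r₁) with hC
  have hfac : ((l.factorial : ℕ) : ℝ) ≠ 0 := Nat.cast_ne_zero.2 (Nat.factorial_ne_zero _)
  have hG : Real.Gamma r₁ ≠ 0 := (Real.Gamma_pos_of_pos hr₁).ne'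
  have hcr : (0 : ℝ) < (1 / c₁) ^ r₁ := Real.rpow_pos_of_pos (by positivity) _
  have h_eq : ∀ x ∈ Set.Ioi (0 : ℝ),
      C * (x ^ ((r₁ + l) - 1) * Real.exp (-((c₁ + L) * x)))
        = poissonPMF (-x * Real.log (1 - p)) l * gammaPDF r₁ (1 / c₁) x := by
    intro x hx
    have hx0 : (0 : ℝ) < x := hx
    rw [poissonPMF, gammaPDF, if_pos hx0]
    have h1 : (-x * Real.log (1 - p)) ^ l = x ^ l * L ^ l := by
      rw [show -x * Real.log (1 - p) = x * L by rw [hLdef]; ring, mul_pow]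
    have h2 : -x / (1 / c₁) = -(c₁ * x) := by field_simp
    have h3 : Real.exp (-(-x * Real.log (1 - p))) * Real.exp (-(c₁ * x))
        = Real.exp (-((c₁ + L) * x)) := by
      rw [← Real.exp_add]
      congr 1
      rw [hLdef]; ring
    have h4 : x ^ ((r₁ + l) - 1) = x ^ (r₁ - 1) * x ^ (l : ℕ) := by
      rw [← Real.rpow_natCast x l, ← Real.rpow_add hx0]
      congr 1
      ring
    rw [h1, h2, h4, hC]
    field_simp
    rw [← h3]
    ring
  have hint := (integrableOn_rpow_exp (a := r₁ + l) (by positivity) hcL).const_mul C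
  have hint' : IntegrableOn
      (fun x : ℝ => C * (x ^ ((r₁ + l) - 1) * Real.exp (-((c₁ + L) * x)))) (Set.Ioi 0) := hint
  exact hint'.congr_fun h_eq measurableSet_Ioi


/-- Lemma 2: with m ~ NB(r,p), r ~ Gamma(r₁,1/c₁) and p' = -ln(1-p)/(c₁-ln(1-p)):
if l ~ Poisson(-r ln(1-p)) then marginally l ~ NB(r₁,p'); and m can equivalently be
generated as m = Σ_{t=1}^l Log(p) with l ~ NB(r₁,p') (i.e. l the compound of Log(p')
sums over l' ~ Poisson(-r₁ ln(1-p'))). -/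
theorem nb_gamma_mixed_compound (r₁ c₁ p : ℝ) (hr₁ : 0 < r₁) (hc₁ : 0 < c₁)
    (hp : 0 < p) (hp1 : p < 1) :
    (∀ l : ℕ,
      (∫ x in Set.Ioi (0 : ℝ),
          poissonPMF (-x * Real.log (1 - p)) l * gammaPDF r₁ (1 / c₁) x)
        = nbPMF r₁ (-Real.log (1 - p) / (c₁ - Real.log (1 - p))) l) ∧
    (∀ k : ℕ,
      (∫ x in Set.Ioi (0 : ℝ), nbPMF x p k * gammaPDF r₁ (1 / c₁) x)
        = ∑' l : ℕ,
            nbPMF r₁ (-Real.log (1 - p) / (c₁ - Real.log (1 - p))) l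
              * logConvPow p l k) := by
  constructor
  · exact part1 r₁ c₁ p hr₁ hc₁ hp hp1
  · intro k
    have h_eq2 : ∀ x ∈ Set.Ioi (0 : ℝ), nbPMF x p k * gammaPDF r₁ (1 / c₁) x
        = ∑ l ∈ Finset.range (k + 1), logConvPow p l k *
            (poissonPMF (-x * Real.log (1 - p)) l * gammaPDF r₁ (1 / c₁) x) := by
      intro x hx
      have hx0 : (0 : ℝ) < x := hx
      rw [star p hp hp1 x hx0 k, compPMF, Finset.sum_mul]
      refine Finset.sum_congr rfl fun l _ => ?_
      rw [show -x * Real.log (1 - p) = x * -Real.log (1 - p) by ring]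
      ring
    rw [setIntegral_congr_fun measurableSet_Ioi h_eq2,
      MeasureTheory.integral_finset_sum _ (fun l _ =>
        ((integrable_pg r₁ c₁ p hr₁ hc₁ hp hp1 l).const_mul (logConvPow p l k)))]
    have hval : ∀ l ∈ Finset.range (k + 1),
        (∫ x in Set.Ioi (0 : ℝ), logConvPow p l k *
            (poissonPMF (-x * Real.log (1 - p)) l * gammaPDF r₁ (1 / c₁) x))
          = logConvPow p l k
              * nbPMF r₁ (-Real.log (1 - p) / (c₁ - Real.log (1 - p))) l := by
      intro l _
      rw [MeasureTheory.integral_const_mul, part1 r₁ c₁ p hr₁ hc₁ hp hp1 l]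
    rw [Finset.sum_congr rfl hval,
      tsum_eq_sum (s := Finset.range (k + 1)) (fun l hl => by
        rw [Finset.mem_range] at hl
        rw [logConvPow_eq_zero p l k (by omega), mul_zero])]
    exact Finset.sum_congr rfl fun l _ => mul_comm _ _
end
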